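/- Let X_1, X_2, X_r, Y_1, Y_r, Ŷ_r be finite discrete random variables whose joint law factors as p(x_1)p(x_2)p(x_r)p(y_1,y_r|x_1,x_2,x_r)p(ŷ_r|x_r,y_r), and suppose the symmetry conditions I(X_r;Y_1|X_1) = I(X_r;Y_2|X_2) and I(Ŷ_r;Y_r|X_1,X_r,Y_1) = I(Ŷ_r;Y_r|X_2,X_r,Y_2) hold together with the binning constraint max{I(Ŷ_r;Y_r|X_1,X_r,Y_1), I(Ŷ_r;Y_r|X_2,X_r,Y_2)} ≤ min{I(X_r;Y_1|X_1), I(X_r;Y_2|X_2)}. Then I(X_2;Y_1,Ŷ_r|X_1,X_r) ≤ I(X_2,X_r;Y_1|X_1) − I(Ŷ_r;Y_r|X_1,X_2,X_r,Y_1), with equality when I(X_r;Y_1|X_1) = I(Ŷ_r;Y_r|X_1,X_r,Y_1). -/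

import Mathlib

open scoped BigOperators Classical

/-- Probability that the random variable `X` takes value `a`, under pmf `p` on `Ω`. -/
noncomputable def jp {Ω A : Type*} [Fintype Ω] (p : Ω → ℝ) (X : Ω → A) (a : A) : ℝ :=
  ∑ ω, if X ω = a then p ω else 0

/-- Conditional mutual information `I(X;Y|Z)` of finite discrete random variables
(natural logarithm). -/
noncomputable def condMI {Ω A B C : Type*} [Fintype Ω] [Fintype A] [Fintype B] [Fintype C]
    (p : Ω → ℝ) (X : Ω → A) (Y : Ω → B) (Z : Ω → C) : ℝ :=
  ∑ a : A, ∑ b : B, ∑ c : C,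
    jp p (fun ω => (X ω, Y ω, Z ω)) (a, b, c) *
      Real.log (jp p (fun ω => (X ω, Y ω, Z ω)) (a, b, c) * jp p Z c /
        (jp p (fun ω => (X ω, Z ω)) (a, c) * jp p (fun ω => (Y ω, Z ω)) (b, c)))

/-- `p` is a probability mass function. -/
def IsPMF {Ω : Type*} [Fintype Ω] (p : Ω → ℝ) : Prop :=
  (∀ ω, 0 ≤ p ω) ∧ ∑ ω, p ω = 1

section helpers
variable {Ω A B C D : Type*} [Fintype Ω]

lemma jp_congr (p : Ω → ℝ) {X : Ω → A} {Y : Ω → B} {a : A} {b : B}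
    (h : ∀ ω, X ω = a ↔ Y ω = b) : jp p X a = jp p Y b := by
  unfold jp; exact Finset.sum_congr rfl fun ω _ => by simp [h ω]

lemma jp_le (p : Ω → ℝ) (hp : ∀ ω, 0 ≤ p ω) {X : Ω → A} {Y : Ω → B} {a : A} {b : B}
    (h : ∀ ω, X ω = a → Y ω = b) : jp p X a ≤ jp p Y b := by
  unfold jp
  refine Finset.sum_le_sum fun ω _ => ?_
  by_cases hx : X ω = a
  · simp [hx, h ω hx]
  · simp only [hx, if_false]
    split <;> [exact hp ω; exact le_rfl]

lemma jp_self (p : Ω → ℝ) (hp : ∀ ω, 0 ≤ p ω) (X : Ω → A) (ω : Ω) :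
    p ω ≤ jp p X (X ω) := by
  unfold jp
  refine Finset.single_le_sum (f := fun ω' => if X ω' = X ω then p ω' else 0)
    (fun ω' _ => by split <;> [exact hp ω'; exact le_rfl]) (Finset.mem_univ ω) |>.trans_eq' ?_
  simp

lemma jp_marg [Fintype B] (p : Ω → ℝ) (X : Ω → A) (Y : Ω → B) (a : A) :
    jp p X a = ∑ b, jp p (fun ω => (X ω, Y ω)) (a, b) := by
  unfold jp
  rw [Finset.sum_comm]
  refine Finset.sum_congr rfl fun ω _ => ?_
  by_cases hx : X ω = a <;> simp [Prod.ext_iff, hx]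

lemma sum_jp_mul [Fintype A] [Fintype B] [Fintype C] (p : Ω → ℝ)
    (X : Ω → A) (Y : Ω → B) (Z : Ω → C) (F : A → B → C → ℝ) :
    ∑ a, ∑ b, ∑ c, jp p (fun ω => (X ω, Y ω, Z ω)) (a, b, c) * F a b c
      = ∑ ω, p ω * F (X ω) (Y ω) (Z ω) := by
  unfold jp
  simp only [Finset.sum_mul, ite_mul, zero_mul]
  conv_lhs => enter [2, a, 2, b]; rw [Finset.sum_comm]
  conv_lhs => enter [2, a]; rw [Finset.sum_comm]
  rw [Finset.sum_comm]
  refine Finset.sum_congr rfl fun ω _ => ?_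
  simp [Prod.ext_iff, ite_and, Finset.sum_ite_eq, Finset.sum_ite_eq']

end helpers

section helpers2
variable {Ω A B C D A' B' C' : Type*} [Fintype Ω]

lemma condMI_eq_sum [Fintype A] [Fintype B] [Fintype C] (p : Ω → ℝ)
    (X : Ω → A) (Y : Ω → B) (Z : Ω → C) :
    condMI p X Y Z = ∑ ω, p ω *
      Real.log (jp p (fun ω' => (X ω', Y ω', Z ω')) (X ω, Y ω, Z ω) * jp p Z (Z ω) /
        (jp p (fun ω' => (X ω', Z ω')) (X ω, Z ω) *
          jp p (fun ω' => (Y ω', Z ω')) (Y ω, Z ω))) := by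
  rw [condMI, sum_jp_mul p X Y Z (fun a b c =>
    Real.log (jp p (fun ω => (X ω, Y ω, Z ω)) (a, b, c) * jp p Z c /
      (jp p (fun ω => (X ω, Z ω)) (a, c) * jp p (fun ω => (Y ω, Z ω)) (b, c))))]

lemma condMI_congr [Fintype A] [Fintype B] [Fintype C] [Fintype A'] [Fintype B'] [Fintype C']
    (p : Ω → ℝ) {X : Ω → A} {Y : Ω → B} {Z : Ω → C}
    {X' : Ω → A'} {Y' : Ω → B'} {Z' : Ω → C'}
    (hX : ∀ ω ω', X ω' = X ω ↔ X' ω' = X' ω)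
    (hY : ∀ ω ω', Y ω' = Y ω ↔ Y' ω' = Y' ω)
    (hZ : ∀ ω ω', Z ω' = Z ω ↔ Z' ω' = Z' ω) :
    condMI p X Y Z = condMI p X' Y' Z' := by
  rw [condMI_eq_sum, condMI_eq_sum]
  refine Finset.sum_congr rfl fun ω _ => ?_
  rw [jp_congr p (X := fun ω' => (X ω', Y ω', Z ω')) (Y := fun ω' => (X' ω', Y' ω', Z' ω'))
      (a := (X ω, Y ω, Z ω)) (b := (X' ω, Y' ω, Z' ω))
      (fun ω' => by simp only [Prod.ext_iff]; rw [hX ω ω', hY ω ω', hZ ω ω']),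
    jp_congr p (X := Z) (Y := Z') (a := Z ω) (b := Z' ω) (fun ω' => hZ ω ω'),
    jp_congr p (X := fun ω' => (X ω', Z ω')) (Y := fun ω' => (X' ω', Z' ω'))
      (a := (X ω, Z ω)) (b := (X' ω, Z' ω))
      (fun ω' => by simp only [Prod.ext_iff]; rw [hX ω ω', hZ ω ω']),
    jp_congr p (X := fun ω' => (Y ω', Z ω')) (Y := fun ω' => (Y' ω', Z' ω'))
      (a := (Y ω, Z ω)) (b := (Y' ω, Z' ω))
      (fun ω' => by simp only [Prod.ext_iff]; rw [hY ω ω', hZ ω ω'])]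

lemma condMI_symm [Fintype A] [Fintype B] [Fintype C] (p : Ω → ℝ)
    (X : Ω → A) (Y : Ω → B) (Z : Ω → C) :
    condMI p X Y Z = condMI p Y X Z := by
  rw [condMI_eq_sum, condMI_eq_sum]
  refine Finset.sum_congr rfl fun ω _ => ?_
  rw [jp_congr p (X := fun ω' => (X ω', Y ω', Z ω')) (Y := fun ω' => (Y ω', X ω', Z ω'))
    (a := (X ω, Y ω, Z ω)) (b := (Y ω, X ω, Z ω))
    (fun ω' => by simp only [Prod.ext_iff]; tauto),
    mul_comm (jp p (fun ω' => (X ω', Z ω')) (X ω, Z ω)) _]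

lemma condMI_chain [Fintype A] [Fintype B] [Fintype C] [Fintype D]
    (p : Ω → ℝ) (hp : ∀ ω, 0 ≤ p ω)
    (X : Ω → A) (Y : Ω → B) (Z : Ω → C) (W : Ω → D) :
    condMI p X (fun ω => (Y ω, Z ω)) W
      = condMI p X Y W + condMI p X Z (fun ω => (W ω, Y ω)) := by
  rw [condMI_eq_sum, condMI_eq_sum, condMI_eq_sum, ← Finset.sum_add_distrib]
  refine Finset.sum_congr rfl fun ω _ => ?_
  rcases eq_or_lt_of_le (hp ω) with h0 | h0
  · simp [← h0]
  set J := jp p (fun ω' => (X ω', Y ω', Z ω', W ω')) (X ω, Y ω, Z ω, W ω) with hJdef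
  set Jw := jp p W (W ω) with hJw
  set Jxw := jp p (fun ω' => (X ω', W ω')) (X ω, W ω) with hJxw
  set Jyw := jp p (fun ω' => (Y ω', W ω')) (Y ω, W ω) with hJyw
  set Jxyw := jp p (fun ω' => (X ω', Y ω', W ω')) (X ω, Y ω, W ω) with hJxyw
  set Jyzw := jp p (fun ω' => (Y ω', Z ω', W ω')) (Y ω, Z ω, W ω) with hJyzw
  have e1 : jp p (fun ω' => (X ω', (Y ω', Z ω'), W ω')) (X ω, (Y ω, Z ω), W ω) = J :=
    jp_congr p fun ω' => by simp only [Prod.ext_iff]; tauto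
  have e2 : jp p (fun ω' => ((Y ω', Z ω'), W ω')) ((Y ω, Z ω), W ω) = Jyzw :=
    jp_congr p fun ω' => by simp only [Prod.ext_iff]; tauto
  have e3 : jp p (fun ω' => (X ω', Z ω', (W ω', Y ω'))) (X ω, Z ω, (W ω, Y ω)) = J :=
    jp_congr p fun ω' => by simp only [Prod.ext_iff]; tauto
  have e4 : jp p (fun ω' => (W ω', Y ω')) (W ω, Y ω) = Jyw :=
    jp_congr p fun ω' => by simp only [Prod.ext_iff]; tauto
  have e5 : jp p (fun ω' => (X ω', (W ω', Y ω'))) (X ω, (W ω, Y ω)) = Jxyw :=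
    jp_congr p fun ω' => by simp only [Prod.ext_iff]; tauto
  have e6 : jp p (fun ω' => (Z ω', (W ω', Y ω'))) (Z ω, (W ω, Y ω)) = Jyzw :=
    jp_congr p fun ω' => by simp only [Prod.ext_iff]; tauto
  rw [e1, e2, e3, e4, e5, e6]
  have hJ : 0 < J := h0.trans_le (jp_self p hp _ ω)
  have hw : 0 < Jw := hJ.trans_le (jp_le p hp fun ω' h => by
    simp only [Prod.ext_iff] at h ⊢; tauto)
  have hxw : 0 < Jxw := hJ.trans_le (jp_le p hp fun ω' h => by
    simp only [Prod.ext_iff] at h ⊢; tauto)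
  have hyw : 0 < Jyw := hJ.trans_le (jp_le p hp fun ω' h => by
    simp only [Prod.ext_iff] at h ⊢; tauto)
  have hxyw : 0 < Jxyw := hJ.trans_le (jp_le p hp fun ω' h => by
    simp only [Prod.ext_iff] at h ⊢; tauto)
  have hyzw : 0 < Jyzw := hJ.trans_le (jp_le p hp fun ω' h => by
    simp only [Prod.ext_iff] at h ⊢; tauto)
  rw [← mul_add, ← Real.log_mul (by positivity) (by positivity)]
  congr 2
  field_simp

lemma condMI_zero [Fintype A] [Fintype B] [Fintype C] (p : Ω → ℝ) (hp : ∀ ω, 0 ≤ p ω)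
    (X : Ω → A) (Y : Ω → B) (Z : Ω → C)
    (u : A → C → ℝ) (v : B → C → ℝ)
    (h : ∀ a b c, jp p (fun ω => (X ω, Y ω, Z ω)) (a, b, c) = u a c * v b c) :
    condMI p X Y Z = 0 := by
  have hV : ∀ a c, jp p (fun ω' => (X ω', Z ω')) (a, c) = u a c * ∑ b, v b c := by
    intro a c
    rw [jp_marg p _ Y (a, c), Finset.mul_sum]
    refine Finset.sum_congr rfl fun b _ => ?_
    rw [jp_congr p (X := fun ω' => ((X ω', Z ω'), Y ω')) (Y := fun ω' => (X ω', Y ω', Z ω'))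
      (a := ((a, c), b)) (b := (a, b, c)) (fun ω' => by simp only [Prod.ext_iff]; tauto), h]
  have hU : ∀ b c, jp p (fun ω' => (Y ω', Z ω')) (b, c) = (∑ a, u a c) * v b c := by
    intro b c
    rw [jp_marg p _ X (b, c), Finset.sum_mul]
    refine Finset.sum_congr rfl fun a _ => ?_
    rw [jp_congr p (X := fun ω' => ((Y ω', Z ω'), X ω')) (Y := fun ω' => (X ω', Y ω', Z ω'))
      (a := ((b, c), a)) (b := (a, b, c)) (fun ω' => by simp only [Prod.ext_iff]; tauto), h]
  have hZc : ∀ c, jp p Z c = (∑ a, u a c) * ∑ b, v b c := by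
    intro c
    rw [jp_marg p Z X c, Finset.sum_mul]
    refine Finset.sum_congr rfl fun a _ => ?_
    rw [jp_congr p (X := fun ω' => (Z ω', X ω')) (Y := fun ω' => (X ω', Z ω'))
      (a := (c, a)) (b := (a, c)) (fun ω' => by simp only [Prod.ext_iff]; tauto), hV]
  rw [condMI_eq_sum]
  refine Finset.sum_eq_zero fun ω _ => ?_
  rcases eq_or_lt_of_le (hp ω) with h0 | h0
  · simp [← h0]
  have hJ : 0 < jp p (fun ω' => (X ω', Y ω', Z ω')) (X ω, Y ω, Z ω) :=
    h0.trans_le (jp_self p hp _ ω)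
  have hxz : 0 < jp p (fun ω' => (X ω', Z ω')) (X ω, Z ω) := hJ.trans_le (jp_le p hp
    fun ω' h => by simp only [Prod.ext_iff] at h ⊢; tauto)
  have hyz : 0 < jp p (fun ω' => (Y ω', Z ω')) (Y ω, Z ω) := hJ.trans_le (jp_le p hp
    fun ω' h => by simp only [Prod.ext_iff] at h ⊢; tauto)
  have harg : jp p (fun ω' => (X ω', Y ω', Z ω')) (X ω, Y ω, Z ω) * jp p Z (Z ω) /
      (jp p (fun ω' => (X ω', Z ω')) (X ω, Z ω) *
        jp p (fun ω' => (Y ω', Z ω')) (Y ω, Z ω)) = 1 := by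
    rw [div_eq_one_iff_eq (by positivity), h, hZc, hV, hU]
    ring
  rw [harg, Real.log_one, mul_zero]
end helpers2

/-- under the factorization
`p(x1)p(x2)p(xr)p(y1,yr|x1,x2,xr)p(ŷr|xr,yr)`, the symmetry conditions and the binning
constraint, the original compress-forward rate never exceeds the no-binning rate:
`I(X2;Y1,Yh|X1,Xr) ≤ I(X2,Xr;Y1|X1) − I(Yh;Yr|X1,X2,Xr,Y1)`, with equality when
`I(Xr;Y1|X1) = I(Yh;Yr|X1,Xr,Y1)`. -/
theorem stmt12 {Ω A1 A2 Ar B1 B2 Br Bh : Type*} [Fintype Ω]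
    [Fintype A1] [Fintype A2] [Fintype Ar] [Fintype B1] [Fintype B2] [Fintype Br] [Fintype Bh]
    (p : Ω → ℝ) (hp : IsPMF p)
    (X1 : Ω → A1) (X2 : Ω → A2) (Xr : Ω → Ar)
    (Y1 : Ω → B1) (Y2 : Ω → B2) (Yr : Ω → Br) (Yh : Ω → Bh)
    (hfact : ∃ (f1 : A1 → ℝ) (f2 : A2 → ℝ) (fr : Ar → ℝ)
        (fc : B1 → Br → A1 → A2 → Ar → ℝ) (fh : Bh → Ar → Br → ℝ),
      ∀ a1 a2 ar b1 br h,
        jp p (fun ω => (X1 ω, X2 ω, Xr ω, Y1 ω, Yr ω, Yh ω)) (a1, a2, ar, b1, br, h) =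
          f1 a1 * f2 a2 * fr ar * fc b1 br a1 a2 ar * fh h ar br)
    (hsym1 : condMI p Xr Y1 X1 = condMI p Xr Y2 X2)
    (hsym2 : condMI p Yh Yr (fun ω => (X1 ω, Xr ω, Y1 ω)) =
      condMI p Yh Yr (fun ω => (X2 ω, Xr ω, Y2 ω)))
    (hbin : max (condMI p Yh Yr (fun ω => (X1 ω, Xr ω, Y1 ω)))
        (condMI p Yh Yr (fun ω => (X2 ω, Xr ω, Y2 ω))) ≤
      min (condMI p Xr Y1 X1) (condMI p Xr Y2 X2)) :
    condMI p X2 (fun ω => (Y1 ω, Yh ω)) (fun ω => (X1 ω, Xr ω)) ≤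
      condMI p (fun ω => (X2 ω, Xr ω)) Y1 X1 -
        condMI p Yh Yr (fun ω => (X1 ω, X2 ω, Xr ω, Y1 ω)) ∧
    (condMI p Xr Y1 X1 = condMI p Yh Yr (fun ω => (X1 ω, Xr ω, Y1 ω)) →
      condMI p X2 (fun ω => (Y1 ω, Yh ω)) (fun ω => (X1 ω, Xr ω)) =
        condMI p (fun ω => (X2 ω, Xr ω)) Y1 X1 -
          condMI p Yh Yr (fun ω => (X1 ω, X2 ω, Xr ω, Y1 ω))) := by
  obtain ⟨hp0, -⟩ := hp
  obtain ⟨f1, f2, fr, fc, fh, hf⟩ := hfact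
  -- (i) chain rule for the LHS
  have hI : condMI p X2 (fun ω => (Y1 ω, Yh ω)) (fun ω => (X1 ω, Xr ω))
      = condMI p X2 Y1 (fun ω => (X1 ω, Xr ω))
        + condMI p X2 Yh (fun ω => ((X1 ω, Xr ω), Y1 ω)) :=
    condMI_chain p hp0 X2 Y1 Yh (fun ω => (X1 ω, Xr ω))
  -- (ii) symmetry + reassociation
  have hII : condMI p X2 Yh (fun ω => ((X1 ω, Xr ω), Y1 ω))
      = condMI p Yh X2 (fun ω => (X1 ω, Xr ω, Y1 ω)) := by
    rw [condMI_symm]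
    exact condMI_congr p (fun _ _ => Iff.rfl) (fun _ _ => Iff.rfl)
      (fun ω ω' => by simp only [Prod.ext_iff]; tauto)
  -- (iii) chain: I(Yh; Yr,X2 | V) = I(Yh;Yr|V) + I(Yh;X2|V,Yr)
  have hIII : condMI p Yh (fun ω => (Yr ω, X2 ω)) (fun ω => (X1 ω, Xr ω, Y1 ω))
      = condMI p Yh Yr (fun ω => (X1 ω, Xr ω, Y1 ω))
        + condMI p Yh X2 (fun ω => ((X1 ω, Xr ω, Y1 ω), Yr ω)) :=
    condMI_chain p hp0 Yh Yr X2 (fun ω => (X1 ω, Xr ω, Y1 ω))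
  -- (iv) Markov: I(Yh;X2|X1,Xr,Y1,Yr) = 0
  have hzero : condMI p Yh X2 (fun ω => ((X1 ω, Xr ω, Y1 ω), Yr ω)) = 0 := by
    refine condMI_zero p hp0 Yh X2 _
      (fun hh z => f1 z.1.1 * fr z.1.2.1 * fh hh z.1.2.1 z.2)
      (fun a2 z => f2 a2 * fc z.1.2.2 z.2 z.1.1 a2 z.1.2.1) ?_
    rintro hh a2 ⟨⟨a1, ar, b1⟩, br⟩
    rw [jp_congr p
      (Y := fun ω => (X1 ω, X2 ω, Xr ω, Y1 ω, Yr ω, Yh ω)) (b := (a1, a2, ar, b1, br, hh))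
      (fun ω => by simp only [Prod.ext_iff]; tauto), hf]
    ring
  -- (v) chain other order
  have hV : condMI p Yh (fun ω => (X2 ω, Yr ω)) (fun ω => (X1 ω, Xr ω, Y1 ω))
      = condMI p Yh X2 (fun ω => (X1 ω, Xr ω, Y1 ω))
        + condMI p Yh Yr (fun ω => ((X1 ω, Xr ω, Y1 ω), X2 ω)) :=
    condMI_chain p hp0 Yh X2 Yr (fun ω => (X1 ω, Xr ω, Y1 ω))
  have hswap : condMI p Yh (fun ω => (X2 ω, Yr ω)) (fun ω => (X1 ω, Xr ω, Y1 ω))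
      = condMI p Yh (fun ω => (Yr ω, X2 ω)) (fun ω => (X1 ω, Xr ω, Y1 ω)) :=
    condMI_congr p (fun _ _ => Iff.rfl)
      (fun ω ω' => by simp only [Prod.ext_iff]; tauto) (fun _ _ => Iff.rfl)
  have hre : condMI p Yh Yr (fun ω => ((X1 ω, Xr ω, Y1 ω), X2 ω))
      = condMI p Yh Yr (fun ω => (X1 ω, X2 ω, Xr ω, Y1 ω)) :=
    condMI_congr p (fun _ _ => Iff.rfl) (fun _ _ => Iff.rfl)
      (fun ω ω' => by simp only [Prod.ext_iff]; tauto)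
  -- (vi) chain rule for the RHS
  have hR : condMI p (fun ω => (X2 ω, Xr ω)) Y1 X1
      = condMI p Xr Y1 X1 + condMI p X2 Y1 (fun ω => (X1 ω, Xr ω)) := by
    rw [condMI_symm,
      condMI_congr p (X := Y1) (Y := fun ω => (X2 ω, Xr ω)) (Z := X1)
        (Y' := fun ω => (Xr ω, X2 ω))
        (fun _ _ => Iff.rfl) (fun ω ω' => by simp only [Prod.ext_iff]; tauto)
        (fun _ _ => Iff.rfl),
      condMI_chain p hp0 Y1 Xr X2 X1, condMI_symm p Y1 Xr X1,
      condMI_symm p Y1 X2 (fun ω => (X1 ω, Xr ω))]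
  -- binning constraint
  have hE : condMI p Yh Yr (fun ω => (X1 ω, Xr ω, Y1 ω)) ≤ condMI p Xr Y1 X1 :=
    ((le_max_left _ _).trans hbin).trans (min_le_left _ _)
  constructor
  · linarith [hI, hII, hIII, hzero, hV, hswap, hre, hR, hE]
  · intro heq
    linarith [hI, hII, hIII, hzero, hV, hswap, hre, hR]
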